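/- The interval [0, 1/6] is contained in S; that is, for every p ∈ [0,1/6] the measure p·δ_0 + ((1−p)/2)(δ_{-2}+δ_2) can be embedded in the simple symmetric random walk by a UI stopping time of the natural filtration. -/

import Mathlib

open MeasureTheory ProbabilityTheory Filter Set
open scoped ENNReal NNReal Topology

noncomputable section

namespace RWSkorokhod

variable {Ω : Type*} [MeasurableSpace Ω]

/-- The simple symmetric random walk `X n = ξ 1 + ⋯ + ξ n` built from the steps `ξ`. -/
def walk (ξ : ℕ → Ω → ℤ) (n : ℕ) (ω : Ω) : ℤ :=
  ∑ k ∈ Finset.Icc 1 n, ξ k ω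

/-- `ξ` is a sequence of i.i.d. symmetric `±1` steps under the probability measure `P`. -/
structure IsSSRW (P : Measure Ω) (ξ : ℕ → Ω → ℤ) : Prop where
  isProb : IsProbabilityMeasure P
  meas : ∀ k, Measurable (ξ k)
  indep : iIndepFun ξ P
  up : ∀ k, P {ω | ξ k ω = 1} = 1 / 2
  down : ∀ k, P {ω | ξ k ω = -1} = 1 / 2

lemma measurable_walk (ξ : ℕ → Ω → ℤ) (hm : ∀ k, Measurable (ξ k)) (n : ℕ) :
    Measurable (walk ξ n) :=
  Finset.measurable_sum _ fun k _ => hm k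

/-- The natural filtration of the random walk: `F n = σ(X 0, …, X n)`. -/
def natFilt (ξ : ℕ → Ω → ℤ) (hm : ∀ k, Measurable (ξ k)) :
    Filtration ℕ ‹MeasurableSpace Ω› where
  seq n := ⨆ k ∈ Set.Iic n, MeasurableSpace.comap (walk ξ k) inferInstance
  mono' i _ hij := biSup_mono fun k (hk : k ∈ Set.Iic i) => le_trans hk hij
  le' _ := iSup₂_le fun k _ => (measurable_walk ξ hm k).comap_le

/-- `τ` is an (extended-natural-number valued) stopping time for the filtration `F`. -/
def IsStop (F : Filtration ℕ ‹MeasurableSpace Ω›) (τ : Ω → ℕ∞) : Prop :=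
  ∀ n : ℕ, MeasurableSet[F n] {ω | τ ω ≤ (n : ℕ∞)}

/-- `τ` is almost surely finite. -/
def AEFinite (P : Measure Ω) (τ : Ω → ℕ∞) : Prop :=
  ∀ᵐ ω ∂P, τ ω < ⊤

/-- The value `X_τ` of the walk at the stopping time `τ` (junk on `{τ = ∞}`). -/
def stopVal (ξ : ℕ → Ω → ℤ) (τ : Ω → ℕ∞) (ω : Ω) : ℤ :=
  walk ξ (τ ω).toNat ω

/-- The stopped process `X_{n ∧ τ}`, viewed as a real-valued process. -/
def stopProc (ξ : ℕ → Ω → ℤ) (τ : Ω → ℕ∞) (n : ℕ) (ω : Ω) : ℝ :=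
  ((walk ξ (min (n : ℕ∞) (τ ω)).toNat ω : ℤ) : ℝ)

/-- `τ` embeds the measure `μ` : the law of `X_τ` under `P` is `μ`. -/
def Embeds (P : Measure Ω) (ξ : ℕ → Ω → ℤ) (τ : Ω → ℕ∞) (μ : Measure ℤ) : Prop :=
  Measure.map (stopVal ξ τ) P = μ

/-- `τ` is a UI stopping time: an a.s. finite stopping time of the natural filtration such
that the stopped process `(X_{n ∧ τ})` is a uniformly integrable martingale. -/
def IsUIStop (P : Measure Ω) (ξ : ℕ → Ω → ℤ) (hm : ∀ k, Measurable (ξ k))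
    (τ : Ω → ℕ∞) : Prop :=
  IsStop (natFilt ξ hm) τ ∧ AEFinite P τ ∧
    Martingale (stopProc ξ τ) (natFilt ξ hm) P ∧
    UniformIntegrable (stopProc ξ τ) 1 P

/-- The set `M₀^UI` of probability measures on `ℤ` which can be embedded in the random
walk by a UI stopping time of its natural filtration. -/
def MUI (P : Measure Ω) (ξ : ℕ → Ω → ℤ) (hm : ∀ k, Measurable (ξ k)) : Set (Measure ℤ) :=
  {μ | ∃ τ : Ω → ℕ∞, IsUIStop P ξ hm τ ∧ Embeds P ξ τ μ}

/-- A centered probability measure on `ℤ`: finite first moment and mean zero. -/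
def Centered (μ : Measure ℤ) : Prop :=
  IsProbabilityMeasure μ ∧ Integrable (fun n : ℤ => (n : ℝ)) μ ∧
    (∫ n : ℤ, (n : ℝ) ∂μ) = 0

/-- `τ` is a minimal stopping time: any stopping time `σ ≤ τ` a.s. with `X_σ ∼ X_τ`
equals `τ` a.s. -/
def Minimal (P : Measure Ω) (ξ : ℕ → Ω → ℤ) (hm : ∀ k, Measurable (ξ k))
    (τ : Ω → ℕ∞) : Prop :=
  ∀ σ : Ω → ℕ∞, IsStop (natFilt ξ hm) σ → (∀ᵐ ω ∂P, σ ω ≤ τ ω) →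
    Measure.map (stopVal ξ σ) P = Measure.map (stopVal ξ τ) P → σ =ᵐ[P] τ

/-- The measure `μ_p = p δ₀ + ((1-p)/2)(δ₋₂ + δ₂)` on `ℤ`. -/
def muP (p : ℝ) : Measure ℤ :=
  ENNReal.ofReal p • Measure.dirac 0 +
    ENNReal.ofReal ((1 - p) / 2) • (Measure.dirac (-2) + Measure.dirac 2)

/-- The set `S` of `p ∈ [0,1]` such that `μ_p` admits a UI embedding. -/
def Sset (P : Measure Ω) (ξ : ℕ → Ω → ℤ) (hm : ∀ k, Measurable (ξ k)) : Set ℝ :=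
  {p | p ∈ Set.Icc (0 : ℝ) 1 ∧ muP p ∈ MUI P ξ hm}

/-- The exit time `H_N = inf {n : X n ∉ [-N, N]}`. -/
def exitTime (ξ : ℕ → Ω → ℤ) (N : ℕ) (ω : Ω) : ℕ∞ :=
  ⨅ (n : ℕ) (_ : walk ξ n ω ∉ Set.Icc (-(N : ℤ)) (N : ℤ)), (n : ℕ∞)




/-- One greedy digit of the embedding construction. -/
def dstep (s : ℕ) (v : ℝ) : ℕ :=
  if v ≤ (s : ℝ) - 1 then (max 0 ⌈4 * v - 2 * s + 1⌉).toNat else if s = 1 then 0 else 2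

/-- The state `(sₖ, vₖ)` of the digit recursion. -/
def dstate (p : ℝ) : ℕ → ℕ × ℝ
  | 0 => (1, 2 * p)
  | k + 1 =>
    let sv := dstate p k
    let c := dstep sv.1 sv.2
    (2 * sv.1 - c, 4 * sv.2 - 2 * c)

def sfun (p : ℝ) (k : ℕ) : ℕ := (dstate p k).1
def vfun (p : ℝ) (k : ℕ) : ℝ := (dstate p k).2
/-- `cfun p k` is the digit `c_{k+1}`. -/
def cfun (p : ℝ) (k : ℕ) : ℕ := dstep (sfun p k) (vfun p k)
def afun (p : ℝ) (k : ℕ) : ℕ := 2 ^ k - sfun p k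

lemma sfun_zero (p : ℝ) : sfun p 0 = 1 := rfl
lemma vfun_zero (p : ℝ) : vfun p 0 = 2 * p := rfl
lemma afun_zero (p : ℝ) : afun p 0 = 0 := rfl

lemma sfun_succ (p : ℝ) (k : ℕ) : sfun p (k + 1) = 2 * sfun p k - cfun p k := rfl
lemma vfun_succ (p : ℝ) (k : ℕ) :
    vfun p (k + 1) = 4 * vfun p k - 2 * (cfun p k : ℝ) := rfl

/-- Invariant of the digit recursion. -/
def DInv (s : ℕ) (v : ℝ) : Prop :=
  0 ≤ v ∧ (v ≤ (s : ℝ) - 1 ∨ (s = 1 ∧ v ≤ 1 / 3) ∨ (s = 2 ∧ v ≤ 4 / 3))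

lemma dstep_spec {s : ℕ} {v : ℝ} (h : DInv s v) :
    dstep s v ≤ 2 * s ∧ 2 * (dstep s v : ℝ) ≤ 4 * v ∧
      DInv (2 * s - dstep s v) (4 * v - 2 * (dstep s v)) := by
  obtain ⟨hv0, hcase⟩ := h
  by_cases hsafe : v ≤ (s : ℝ) - 1
  · -- safe branch
    have hs1 : (1 : ℝ) ≤ (s : ℝ) := by linarith
    set x : ℝ := 4 * v - 2 * s + 1 with hx
    have hd : dstep s v = (max 0 ⌈x⌉).toNat := by simp [dstep, hsafe, hx]
    have hcast : ((dstep s v : ℕ) : ℝ) = ((max 0 ⌈x⌉ : ℤ) : ℝ) := by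
      rw [hd]
      exact_mod_cast Int.toNat_of_nonneg (le_max_left 0 ⌈x⌉)
    have hxle : x ≤ ((max 0 ⌈x⌉ : ℤ) : ℝ) := by
      have := Int.le_ceil x
      have h2 : ((⌈x⌉ : ℤ) : ℝ) ≤ ((max 0 ⌈x⌉ : ℤ) : ℝ) := by exact_mod_cast le_max_right 0 ⌈x⌉
      linarith
    have hcle : ((max 0 ⌈x⌉ : ℤ) : ℝ) ≤ 2 * v := by
      rcases le_or_gt ⌈x⌉ 0 with h0 | h0
      · have : (max 0 ⌈x⌉ : ℤ) = 0 := by omega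
        rw [this]; push_cast; linarith
      · have : (max 0 ⌈x⌉ : ℤ) = ⌈x⌉ := by omega
        rw [this]
        have := Int.ceil_lt_add_one x
        have hx2 : x + 1 ≤ 2 * v := by simp only [hx]; linarith
        linarith
    have hc2v : 2 * (dstep s v : ℝ) ≤ 4 * v := by rw [hcast]; linarith
    have hcs : dstep s v ≤ 2 * s := by
      have : ((dstep s v : ℕ) : ℝ) ≤ 2 * (s : ℝ) := by rw [hcast]; linarith
      exact_mod_cast this
    refine ⟨hcs, hc2v, ⟨by linarith, Or.inl ?_⟩⟩
    have hsub : ((2 * s - dstep s v : ℕ) : ℝ) = 2 * (s : ℝ) - (dstep s v : ℝ) := by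
      have := hcs; push_cast [Nat.cast_sub this]; ring
    rw [hsub, ← hcast] at *
    have hxc : x ≤ ((dstep s v : ℕ) : ℝ) := by rw [hcast]; exact hxle
    simp only [hx] at hxc; linarith
  · -- unsafe branch
    rcases hcase with h1 | ⟨hs, hv⟩ | ⟨hs, hv⟩
    · exact absurd h1 hsafe
    · have hd : dstep s v = 0 := by
        simp only [dstep]; rw [if_neg hsafe, if_pos hs]
      rw [hd, hs]
      refine ⟨by norm_num, by push_cast; linarith, ⟨by push_cast; linarith,
        Or.inr (Or.inr ⟨by norm_num, by push_cast; linarith⟩)⟩⟩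
    · have hs1 : s ≠ 1 := by omega
      have hd : dstep s v = 2 := by
        simp only [dstep]; rw [if_neg hsafe, if_neg hs1]
      have hv1 : (1 : ℝ) < v := by
        rw [hs] at hsafe; push_cast at hsafe; linarith
      rw [hd, hs]
      refine ⟨by norm_num, by push_cast; linarith, ⟨by push_cast; linarith,
        Or.inr (Or.inr ⟨by norm_num, by push_cast; linarith⟩)⟩⟩

section WithP
variable {p : ℝ} (hp : p ∈ Set.Icc (0 : ℝ) (1 / 6))

include hp

lemma dinv (k : ℕ) : DInv (sfun p k) (vfun p k) := by
  induction k with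
  | zero =>
    obtain ⟨h0, h1⟩ := hp
    exact ⟨by simpa [vfun_zero] using by linarith,
      Or.inr (Or.inl ⟨sfun_zero p, by rw [vfun_zero]; linarith⟩)⟩
  | succ k ih =>
    have h := (dstep_spec ih).2.2
    have hc : cfun p k = dstep (sfun p k) (vfun p k) := rfl
    rw [sfun_succ, vfun_succ, hc]
    exact h

lemma cfun_le (k : ℕ) : cfun p k ≤ 2 * sfun p k := (dstep_spec (dinv hp k)).1

lemma cfun_le_v (k : ℕ) : 2 * (cfun p k : ℝ) ≤ 4 * vfun p k := (dstep_spec (dinv hp k)).2.1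

lemma vfun_nonneg (k : ℕ) : 0 ≤ vfun p k := (dinv hp k).1

lemma sfun_pos (k : ℕ) : 1 ≤ sfun p k := by
  obtain ⟨h0, hc⟩ := dinv hp k
  rcases hc with h | ⟨h, _⟩ | ⟨h, _⟩
  · by_contra hs
    have : sfun p k = 0 := by omega
    rw [this] at h; norm_num at h; linarith
  · omega
  · omega

lemma vfun_le_sfun (k : ℕ) : vfun p k ≤ (sfun p k : ℝ) := by
  obtain ⟨h0, hc⟩ := dinv hp k
  rcases hc with h | ⟨h, h2⟩ | ⟨h, h2⟩
  · linarith
  · rw [h]; push_cast; linarith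
  · rw [h]; push_cast; linarith

lemma sfun_le (k : ℕ) : sfun p k ≤ 2 ^ k := by
  induction k with
  | zero => simp [sfun_zero]
  | succ k ih =>
    rw [sfun_succ]
    have := cfun_le hp k
    have h2 : (2:ℕ) ^ (k+1) = 2 * 2 ^ k := by ring
    omega

lemma afun_add_sfun (k : ℕ) : afun p k + sfun p k = 2 ^ k := by
  have := sfun_le hp k; simp [afun]; omega

lemma afun_succ (k : ℕ) : afun p (k + 1) = 2 * afun p k + cfun p k := by
  have h1 := afun_add_sfun hp k
  have h2 := afun_add_sfun hp (k + 1)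
  have h3 := sfun_succ p k
  have h4 := cfun_le hp k
  have h5 : (2:ℕ) ^ (k+1) = 2 * 2 ^ k := by ring
  omega


lemma cast_afun_succ (k : ℕ) :
    ((afun p (k + 1) : ℕ) : ℝ) = 2 * (afun p k : ℝ) + (cfun p k : ℝ) := by
  rw [afun_succ hp]; push_cast; ring

lemma cast_sfun (k : ℕ) : ((sfun p k : ℕ) : ℝ) = 2 ^ k - (afun p k : ℝ) := by
  have := afun_add_sfun hp k
  have : ((afun p k + sfun p k : ℕ) : ℝ) = ((2 ^ k : ℕ) : ℝ) := by rw [this]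
  push_cast at this; linarith

/-- partial sums of the `c`-series. -/
lemma sum_c (K : ℕ) :
    ∑ k ∈ Finset.range K, (cfun p k : ℝ) * (4 : ℝ)⁻¹ ^ (k + 1)
      = p - vfun p K * (4 : ℝ)⁻¹ ^ K / 2 := by
  induction K with
  | zero => simp [vfun_zero]
  | succ K ih =>
    rw [Finset.sum_range_succ, ih, vfun_succ, pow_succ]
    ring

/-- partial sums of the `a`-series. -/
lemma sum_a (K : ℕ) :
    ∑ k ∈ Finset.range K, (afun p (k + 1) : ℝ) * (4 : ℝ)⁻¹ ^ (k + 1)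
      = 2 * p - ((afun p K : ℝ) + vfun p K) * (4 : ℝ)⁻¹ ^ K := by
  induction K with
  | zero => simp [vfun_zero, afun_zero]
  | succ K ih =>
    rw [Finset.sum_range_succ, ih, cast_afun_succ hp, vfun_succ, pow_succ]
    ring

/-- partial sums of the `s`-series. -/
lemma sum_s (K : ℕ) :
    ∑ k ∈ Finset.range (K + 1), (sfun p k : ℝ) * (4 : ℝ)⁻¹ ^ (k + 1)
      = (1 - p) / 2 - (2 : ℝ)⁻¹ ^ K / 4 + ((afun p K : ℝ) + vfun p K) * (4 : ℝ)⁻¹ ^ K / 4 := by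
  induction K with
  | zero => simp [sfun_zero, vfun_zero, afun_zero]; ring
  | succ K ih =>
    rw [Finset.sum_range_succ, ih, cast_sfun hp (K + 1), cast_afun_succ hp, vfun_succ]
    have h24 : ((2 : ℝ)) ^ K * ((4 : ℝ)⁻¹) ^ K = ((2 : ℝ)⁻¹) ^ K := by
      rw [← mul_pow]; norm_num
    rw [pow_succ ((4:ℝ)⁻¹) (K+1), pow_succ ((4:ℝ)⁻¹) K, pow_succ ((2:ℝ)⁻¹) K,
      pow_succ (2:ℝ) K]
    linear_combination (1/8 : ℝ) * h24
  

lemma tendsto_vterm :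
    Filter.Tendsto (fun K => vfun p K * (4 : ℝ)⁻¹ ^ K) atTop (nhds 0) := by
  have h0 : ∀ K, 0 ≤ vfun p K * (4 : ℝ)⁻¹ ^ K := fun K =>
    mul_nonneg (vfun_nonneg hp K) (by positivity)
  have hle : ∀ K, vfun p K * (4 : ℝ)⁻¹ ^ K ≤ (2 : ℝ)⁻¹ ^ K := by
    intro K
    have h1 : vfun p K ≤ (2 : ℝ) ^ K := by
      have := vfun_le_sfun hp K
      have h2 : ((sfun p K : ℕ) : ℝ) ≤ ((2 ^ K : ℕ) : ℝ) := by exact_mod_cast sfun_le hp K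
      push_cast at h2; linarith
    calc vfun p K * (4 : ℝ)⁻¹ ^ K ≤ (2 : ℝ) ^ K * (4 : ℝ)⁻¹ ^ K := by
          apply mul_le_mul_of_nonneg_right h1 (by positivity)
      _ = (2 : ℝ)⁻¹ ^ K := by rw [← mul_pow]; norm_num
  exact squeeze_zero h0 hle (tendsto_pow_atTop_nhds_zero_of_lt_one (by norm_num) (by norm_num))

lemma tendsto_tterm :
    Filter.Tendsto (fun K => ((afun p K : ℝ) + vfun p K) * (4 : ℝ)⁻¹ ^ K) atTop (nhds 0) := by
  have h0 : ∀ K, 0 ≤ ((afun p K : ℝ) + vfun p K) * (4 : ℝ)⁻¹ ^ K := fun K =>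
    mul_nonneg (by have := vfun_nonneg hp K; positivity) (by positivity)
  have hle : ∀ K, ((afun p K : ℝ) + vfun p K) * (4 : ℝ)⁻¹ ^ K ≤ (2 : ℝ)⁻¹ ^ K := by
    intro K
    have h1 : (afun p K : ℝ) + vfun p K ≤ (2 : ℝ) ^ K := by
      have h2 := vfun_le_sfun hp K
      have h3 : ((afun p K + sfun p K : ℕ) : ℝ) = ((2 ^ K : ℕ) : ℝ) := by
        rw [afun_add_sfun hp K]
      push_cast at h3; linarith
    calc ((afun p K : ℝ) + vfun p K) * (4 : ℝ)⁻¹ ^ K ≤ (2 : ℝ) ^ K * (4 : ℝ)⁻¹ ^ K := by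
          apply mul_le_mul_of_nonneg_right h1 (by positivity)
      _ = (2 : ℝ)⁻¹ ^ K := by rw [← mul_pow]; norm_num
  exact squeeze_zero h0 hle (tendsto_pow_atTop_nhds_zero_of_lt_one (by norm_num) (by norm_num))

omit hp in
lemma summable_half : Summable (fun k : ℕ => ((2 : ℝ)⁻¹) ^ (k + 1)) := by
  simp_rw [pow_succ]
  exact (summable_geometric_of_lt_one (by norm_num) (by norm_num)).mul_right _

lemma hasSum_c : HasSum (fun k => (cfun p k : ℝ) * (4 : ℝ)⁻¹ ^ (k + 1)) p := by
  have hsum : Summable (fun k => (cfun p k : ℝ) * (4 : ℝ)⁻¹ ^ (k + 1)) := by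
    refine Summable.of_nonneg_of_le (fun k => by positivity) (fun k => ?_) summable_half
    have h1 : (cfun p k : ℝ) ≤ (2 : ℝ) ^ (k + 1) := by
      have := cfun_le hp k
      have h2 := sfun_le hp k
      have : cfun p k ≤ 2 ^ (k + 1) := by
        have h3 : (2:ℕ) ^ (k + 1) = 2 * 2 ^ k := by ring
        omega
      exact_mod_cast this
    calc (cfun p k : ℝ) * (4 : ℝ)⁻¹ ^ (k + 1) ≤ (2 : ℝ) ^ (k + 1) * (4 : ℝ)⁻¹ ^ (k + 1) :=
          mul_le_mul_of_nonneg_right h1 (by positivity)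
      _ = (2 : ℝ)⁻¹ ^ (k + 1) := by rw [← mul_pow]; norm_num
  rw [hsum.hasSum_iff_tendsto_nat]
  have : ∀ n, ∑ k ∈ Finset.range n, (cfun p k : ℝ) * (4 : ℝ)⁻¹ ^ (k + 1)
      = p - vfun p n * (4 : ℝ)⁻¹ ^ n / 2 := fun n => sum_c hp n
  simp_rw [this]
  have := (tendsto_vterm hp).div_const 2
  have h2 := (tendsto_const_nhds (x := p) (f := atTop (α := ℕ))).sub this
  simpa using h2

lemma hasSum_s : HasSum (fun k => (sfun p k : ℝ) * (4 : ℝ)⁻¹ ^ (k + 1)) ((1 - p) / 2) := by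
  have hsum : Summable (fun k => (sfun p k : ℝ) * (4 : ℝ)⁻¹ ^ (k + 1)) := by
    refine Summable.of_nonneg_of_le (fun k => by positivity) (fun k => ?_) summable_half
    have h1 : (sfun p k : ℝ) ≤ (2 : ℝ) ^ (k + 1) := by
      have h2 := sfun_le hp k
      have : sfun p k ≤ 2 ^ (k + 1) := by
        have h3 : (2:ℕ) ^ (k + 1) = 2 * 2 ^ k := by ring
        omega
      exact_mod_cast this
    calc (sfun p k : ℝ) * (4 : ℝ)⁻¹ ^ (k + 1) ≤ (2 : ℝ) ^ (k + 1) * (4 : ℝ)⁻¹ ^ (k + 1) :=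
          mul_le_mul_of_nonneg_right h1 (by positivity)
      _ = (2 : ℝ)⁻¹ ^ (k + 1) := by rw [← mul_pow]; norm_num
  rw [hsum.hasSum_iff_tendsto_nat]
  rw [← tendsto_add_atTop_iff_nat 1]
  have : ∀ n, ∑ k ∈ Finset.range (n + 1), (sfun p k : ℝ) * (4 : ℝ)⁻¹ ^ (k + 1)
      = (1 - p) / 2 - (2 : ℝ)⁻¹ ^ n / 4 + ((afun p n : ℝ) + vfun p n) * (4 : ℝ)⁻¹ ^ n / 4 :=
    fun n => sum_s hp n
  simp_rw [this]
  have ht := (tendsto_tterm hp).div_const 4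
  have h2 := ((tendsto_pow_atTop_nhds_zero_of_lt_one (r := (2:ℝ)⁻¹) (by norm_num)
    (by norm_num)).div_const 4)
  have h3 := ((tendsto_const_nhds (x := (1 - p)/2) (f := atTop (α := ℕ))).sub h2).add ht
  simpa using h3

end WithP

section Events

/-- the `j`-th block bit (1-indexed). -/
def bitf (ξ : ℕ → Ω → ℤ) (j : ℕ) (ω : Ω) : ℕ := if ξ (2 * j - 1) ω = 1 then 1 else 0

/-- binary value of the first `k` block bits. -/
def valf (ξ : ℕ → Ω → ℤ) : ℕ → Ω → ℕ
  | 0 => fun _ => 0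
  | k + 1 => fun ω => 2 * valf ξ k ω + bitf ξ (k + 1) ω

/-- the `j`-th block is neutral. -/
def goodf (ξ : ℕ → Ω → ℤ) (j : ℕ) (ω : Ω) : Prop :=
  (ξ (2 * j - 1) ω = 1 ∧ ξ (2 * j) ω = -1) ∨ (ξ (2 * j - 1) ω = -1 ∧ ξ (2 * j) ω = 1)

/-- stop signal at stage `k`. -/
def badf (ξ : ℕ → Ω → ℤ) (a : ℕ → ℕ) (k : ℕ) (ω : Ω) : Prop :=
  ¬ goodf ξ k ω ∨ valf ξ k ω < a k

/-- the stopping stage. -/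
def stopN (ξ : ℕ → Ω → ℤ) (a : ℕ → ℕ) (ω : Ω) : ℕ∞ :=
  ⨅ (k : ℕ) (_ : 1 ≤ k ∧ badf ξ a k ω), (k : ℕ∞)

/-- the stopping time. -/
def stopT (ξ : ℕ → Ω → ℤ) (a : ℕ → ℕ) (ω : Ω) : ℕ∞ := 2 * stopN ξ a ω

variable (ξ : ℕ → Ω → ℤ) (a : ℕ → ℕ)

lemma bitf_le (j : ℕ) (ω : Ω) : bitf ξ j ω ≤ 1 := by
  unfold bitf; split <;> simp

lemma valf_lt (k : ℕ) (ω : Ω) : valf ξ k ω < 2 ^ k := by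
  induction k with
  | zero => simp [valf]
  | succ k ih =>
    have := bitf_le ξ (k + 1) ω
    have h2 : (2:ℕ) ^ (k+1) = 2 * 2 ^ k := by ring
    simp only [valf]; omega

lemma valf_div (k : ℕ) (ω : Ω) : valf ξ k ω = valf ξ (k + 1) ω / 2 := by
  have := bitf_le ξ (k + 1) ω
  simp only [valf]; omega

lemma stopN_le_iff (n : ℕ) (ω : Ω) :
    stopN ξ a ω ≤ (n : ℕ∞) ↔ ∃ k, 1 ≤ k ∧ k ≤ n ∧ badf ξ a k ω := by
  constructor
  · intro h
    by_contra hno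
    push_neg at hno
    have hge : ((n : ℕ∞) + 1) ≤ stopN ξ a ω := by
      refine le_iInf fun k => le_iInf fun hk => ?_
      have : ¬ k ≤ n := fun hkn => hno k hk.1 hkn hk.2
      have : n + 1 ≤ k := by omega
      exact_mod_cast Nat.cast_le.mpr this
    have h4 : (n + 1 : ℕ) ≤ n := by exact_mod_cast le_trans hge h
    omega
  · rintro ⟨k, hk1, hkn, hbad⟩
    calc stopN ξ a ω ≤ (k : ℕ∞) := iInf₂_le k ⟨hk1, hbad⟩
      _ ≤ (n : ℕ∞) := by exact_mod_cast hkn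

lemma stopN_eq {k : ℕ} {ω : Ω} (hk : 1 ≤ k) (hbad : badf ξ a k ω)
    (hmin : ∀ j, 1 ≤ j → j < k → ¬ badf ξ a j ω) : stopN ξ a ω = (k : ℕ∞) := by
  refine le_antisymm (iInf₂_le k ⟨hk, hbad⟩) (le_iInf fun j => le_iInf fun hj => ?_)
  have : ¬ j < k := fun hlt => hmin j hj.1 hlt hj.2
  exact_mod_cast Nat.cast_le.mpr (by omega)

/-- generic cylinder event. -/
def cylGen (ξ : ℕ → Ω → ℤ) (n : ℕ) (σ : ℕ → ℤ) : Set Ω :=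
  ⋂ i ∈ Finset.Icc 1 n, {ω | ξ i ω = σ i}

lemma measurableSet_cylGen (hm : ∀ k, Measurable (ξ k)) (n : ℕ) (σ : ℕ → ℤ) :
    MeasurableSet (cylGen ξ n σ) := by
  refine Set.Finite.measurableSet_biInter (Finset.finite_toSet _) fun i _ => ?_
  exact hm i (measurableSet_singleton (σ i))

lemma mem_cylGen_iff (n : ℕ) (σ : ℕ → ℤ) (ω : Ω) :
    ω ∈ cylGen ξ n σ ↔ ∀ i, 1 ≤ i → i ≤ n → ξ i ω = σ i := by
  simp [cylGen]

/-- digit sign patterns -/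
def sgn0 (k m j : ℕ) : ℤ := if m / 2 ^ (k - j) % 2 = 1 then 1 else -1

def csgnA (k m i : ℕ) : ℤ := if i % 2 = 1 then sgn0 k m ((i + 1) / 2) else - sgn0 k m (i / 2)

def csgnE (e : ℤ) (k m i : ℕ) : ℤ := if 2 * k - 1 ≤ i then e else csgnA (k - 1) m i

def evA (ξ : ℕ → Ω → ℤ) (k m : ℕ) : Set Ω := cylGen ξ (2 * k) (csgnA k m)
def evE (ξ : ℕ → Ω → ℤ) (e : ℤ) (k m : ℕ) : Set Ω := cylGen ξ (2 * k) (csgnE e k m)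

lemma sgn0_cases (k m j : ℕ) : sgn0 k m j = 1 ∨ sgn0 k m j = -1 := by
  unfold sgn0; split <;> simp

lemma csgnA_odd (k m j : ℕ) (hj : 1 ≤ j) : csgnA k m (2 * j - 1) = sgn0 k m j := by
  have h1 : (2 * j - 1) % 2 = 1 := by omega
  have h2 : (2 * j - 1 + 1) / 2 = j := by omega
  simp [csgnA, h1, h2]

lemma csgnA_even (k m j : ℕ) (hj : 1 ≤ j) : csgnA k m (2 * j) = - sgn0 k m j := by
  have h1 : (2 * j) % 2 = 0 := by omega
  have h2 : (2 * j) / 2 = j := by omega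
  simp [csgnA, h1, h2]

lemma evA_good {k m : ℕ} {ω : Ω} (hω : ω ∈ evA ξ k m) :
    ∀ j, 1 ≤ j → j ≤ k → goodf ξ j ω := by
  intro j hj hjk
  rw [evA, mem_cylGen_iff] at hω
  have ho := hω (2 * j - 1) (by omega) (by omega)
  have he := hω (2 * j) (by omega) (by omega)
  rw [csgnA_odd k m j hj] at ho
  rw [csgnA_even k m j hj] at he
  rcases sgn0_cases k m j with h | h <;> rw [h] at ho he
  · exact Or.inl ⟨ho, by simpa using he⟩
  · exact Or.inr ⟨ho, by simpa using he⟩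

lemma evA_valf {k m : ℕ} {ω : Ω} (hm : m < 2 ^ k) (hω : ω ∈ evA ξ k m) :
    ∀ j, j ≤ k → valf ξ j ω = m / 2 ^ (k - j) := by
  intro j hjk
  induction j with
  | zero => simp [valf, Nat.div_eq_of_lt (by simpa using hm)]
  | succ j ih =>
    have hj : j ≤ k := by omega
    rw [evA, mem_cylGen_iff] at hω
    have ho := hω (2 * (j + 1) - 1) (by omega) (by omega)
    rw [csgnA_odd k m (j + 1) (by omega)] at ho
    have hbit : bitf ξ (j + 1) ω = m / 2 ^ (k - (j + 1)) % 2 := by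
      unfold bitf
      rcases Nat.mod_two_eq_zero_or_one (m / 2 ^ (k - (j + 1))) with h | h <;>
        rw [h] <;> unfold sgn0 at ho
      · rw [if_neg (by omega)] at ho
        rw [if_neg (by rw [ho]; decide)]
      · rw [if_pos h] at ho
        rw [if_pos ho]
    have hdd : m / 2 ^ (k - j) = m / 2 ^ (k - (j + 1)) / 2 := by
      rcases Nat.lt_or_ge j k with h | h
      · have : k - j = (k - (j + 1)) + 1 := by omega
        rw [this, pow_succ, ← Nat.div_div_eq_div_mul]
      · omega
    simp only [valf, ih hj, hbit, hdd]
    omega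

lemma csgnA_cases (k m i : ℕ) : csgnA k m i = 1 ∨ csgnA k m i = -1 := by
  unfold csgnA
  split
  · exact sgn0_cases _ _ _
  · rcases sgn0_cases k m (i / 2) with h | h <;> rw [h] <;> simp

lemma csgnE_cases {e : ℤ} (he : e = 1 ∨ e = -1) (k m i : ℕ) :
    csgnE e k m i = 1 ∨ csgnE e k m i = -1 := by
  unfold csgnE; split
  · exact he
  · exact csgnA_cases _ _ _

lemma evE_sub {e : ℤ} {k m : ℕ} {ω : Ω} (hω : ω ∈ evE ξ e (k + 1) m) :
    ω ∈ evA ξ k m := by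
  rw [evE, mem_cylGen_iff] at hω
  rw [evA, mem_cylGen_iff]
  intro i h1 h2
  have := hω i h1 (by omega)
  rwa [csgnE, if_neg (by omega), Nat.add_sub_cancel] at this

lemma evE_last {e : ℤ} {k m : ℕ} {ω : Ω} (hω : ω ∈ evE ξ e (k + 1) m) :
    ξ (2 * k + 1) ω = e ∧ ξ (2 * k + 2) ω = e := by
  rw [evE, mem_cylGen_iff] at hω
  have h1 := hω (2 * k + 1) (by omega) (by omega)
  have h2 := hω (2 * k + 2) (by omega) (by omega)
  rw [csgnE, if_pos (by omega)] at h1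
  rw [csgnE, if_pos (by omega)] at h2
  exact ⟨h1, h2⟩

lemma walk_succ' (n : ℕ) (ω : Ω) : walk ξ (n + 1) ω = walk ξ n ω + ξ (n + 1) ω := by
  rw [walk, walk, Finset.sum_Icc_succ_top (by omega : 1 ≤ n + 1)]

lemma walk_zero' (ω : Ω) : walk ξ 0 ω = 0 := by simp [walk]

lemma walk_good_even {i : ℕ} {ω : Ω} (hgood : ∀ j, 1 ≤ j → j ≤ i → goodf ξ j ω) :
    walk ξ (2 * i) ω = 0 := by
  induction i with
  | zero => simp [walk]
  | succ i ih =>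
    have h2 : 2 * (i + 1) = (2 * i + 1) + 1 := by ring
    rw [h2, walk_succ', walk_succ']
    have h0 : walk ξ (2 * i) ω = 0 := ih fun j hj hji => hgood j hj (by omega)
    have hg := hgood (i + 1) (by omega) le_rfl
    rw [goodf] at hg
    have ho : 2 * (i + 1) - 1 = 2 * i + 1 := by omega
    have he : 2 * (i + 1) = 2 * i + 2 := by omega
    rw [ho, he] at hg
    rcases hg with ⟨ha, hb⟩ | ⟨ha, hb⟩ <;> rw [h0, ha, hb] <;> ring

/-- descent: surviving at stage `K` implies surviving at all earlier stages. -/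
lemma desc (ha0 : a 0 = 0) (haA : ∀ j, 2 * a j ≤ a (j + 1)) {K : ℕ} {ω : Ω}
    (h : a K ≤ valf ξ K ω) : ∀ j, j ≤ K → a j ≤ valf ξ j ω := by
  have key : ∀ i, a (K - i) ≤ valf ξ (K - i) ω := by
    intro i
    induction i with
    | zero => simpa using h
    | succ i ih =>
      rcases Nat.lt_or_ge i K with hi | hi
      · have hstep : K - (i + 1) + 1 = K - i := by omega
        have hv := valf_div ξ (K - (i + 1)) ω
        rw [hstep] at hv
        have h2 : 2 * a (K - (i + 1)) ≤ a (K - (i + 1) + 1) := haA _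
        rw [hstep] at h2
        omega
      · have h0 : K - (i + 1) = 0 := by omega
        rw [h0, ha0]; omega
  intro j hj
  have := key (K - j)
  rwa [show K - (K - j) = j by omega] at this

section Labels
variable (ha0 : a 0 = 0) (haA : ∀ j, 2 * a j ≤ a (j + 1)) (haU : ∀ k, a k ≤ 2 ^ k)
include ha0 haA haU

lemma labelA {k m : ℕ} {ω : Ω} (hm1 : 2 * a k ≤ m) (hm2 : m < a (k + 1))
    (hω : ω ∈ evA ξ (k + 1) m) :
    stopN ξ a ω = ((k + 1 : ℕ) : ℕ∞) ∧ valf ξ (k + 1) ω = m ∧ goodf ξ (k + 1) ω := by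
  have hmlt : m < 2 ^ (k + 1) := lt_of_lt_of_le hm2 (haU (k + 1))
  have hval := evA_valf ξ hmlt hω
  have hvk1 : valf ξ (k + 1) ω = m := by simpa using hval (k + 1) le_rfl
  have hgood := evA_good ξ hω
  have hbadk : badf ξ a (k + 1) ω := Or.inr (by rw [hvk1]; exact hm2)
  have hvk : a k ≤ valf ξ k ω := by
    rw [hval k (by omega), show k + 1 - k = 1 by omega, pow_one]
    omega
  have hdesc := desc ξ a ha0 haA hvk
  refine ⟨stopN_eq ξ a (by omega) hbadk (fun j hj hjk => ?_), hvk1,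
    hgood (k + 1) (by omega) le_rfl⟩
  exact not_or.mpr ⟨not_not.mpr (hgood j hj (by omega)),
    not_lt.mpr (hdesc j (by omega))⟩

lemma labelE {e : ℤ} (he : e = 1 ∨ e = -1) {k m : ℕ} {ω : Ω} (hm1 : a k ≤ m)
    (hm2 : m < 2 ^ k) (hω : ω ∈ evE ξ e (k + 1) m) :
    stopN ξ a ω = ((k + 1 : ℕ) : ℕ∞) ∧ valf ξ k ω = m ∧
      ξ (2 * k + 1) ω = e ∧ ξ (2 * k + 2) ω = e := by
  have hA := evE_sub ξ hω
  have hval := evA_valf ξ hm2 hA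
  have hvk : valf ξ k ω = m := by simpa using hval k le_rfl
  have hgood := evA_good ξ hA
  have hlast := evE_last ξ hω
  have hbadk : badf ξ a (k + 1) ω := by
    refine Or.inl fun hg => ?_
    rw [goodf, show 2 * (k + 1) - 1 = 2 * k + 1 by omega,
      show 2 * (k + 1) = 2 * k + 2 by omega] at hg
    rcases he with rfl | rfl <;> rcases hg with ⟨h1, h2⟩ | ⟨h1, h2⟩ <;>
      simp_all <;> omega
  have hdesc := desc ξ a ha0 haA (by rw [hvk]; exact hm1)
  refine ⟨stopN_eq ξ a (by omega) hbadk (fun j hj hjk => ?_), hvk, hlast.1, hlast.2⟩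
  exact not_or.mpr ⟨not_not.mpr (hgood j hj (by omega)),
    not_lt.mpr (hdesc j (by omega))⟩

end Labels

lemma walkA_end {k m : ℕ} {ω : Ω} (hω : ω ∈ evA ξ (k + 1) m) :
    walk ξ (2 * (k + 1)) ω = 0 :=
  walk_good_even ξ (evA_good ξ hω)

lemma walkE_end {e : ℤ} {k m : ℕ} {ω : Ω} (hω : ω ∈ evE ξ e (k + 1) m) :
    walk ξ (2 * (k + 1)) ω = 2 * e := by
  have h0 : walk ξ (2 * k) ω = 0 := walk_good_even ξ (evA_good ξ (evE_sub ξ hω))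
  have hlast := evE_last ξ hω
  rw [show 2 * (k + 1) = (2 * k + 1) + 1 by ring, walk_succ', walk_succ', h0,
    hlast.1, hlast.2]
  ring

lemma walkA_bound {k m : ℕ} {ω : Ω} (hω : ω ∈ evA ξ (k + 1) m) :
    ∀ j, j ≤ 2 * (k + 1) → |walk ξ j ω| ≤ 2 := by
  intro j hj
  have hgood := evA_good ξ hω
  rcases Nat.even_or_odd j with ⟨l, hl⟩ | ⟨l, hl⟩
  · have : walk ξ j ω = 0 := by
      rw [hl, show l + l = 2 * l by ring]
      exact walk_good_even ξ fun i hi hil => hgood i hi (by omega)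
    rw [this]; norm_num
  · have h0 : walk ξ (2 * l) ω = 0 :=
      walk_good_even ξ fun i hi hil => hgood i hi (by omega)
    have hmem := (mem_cylGen_iff ξ _ _ ω).mp hω (2 * l + 1) (by omega) (by omega)
    rw [hl, walk_succ', h0, hmem]
    rcases csgnA_cases (k + 1) m (2 * l + 1) with h | h <;> rw [h] <;> norm_num

lemma walkE_bound {e : ℤ} (he : e = 1 ∨ e = -1) {k m : ℕ} {ω : Ω}
    (hω : ω ∈ evE ξ e (k + 1) m) :
    ∀ j, j ≤ 2 * (k + 1) → |walk ξ j ω| ≤ 2 := by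
  intro j hj
  have hgood := evA_good ξ (evE_sub ξ hω)
  rcases Nat.even_or_odd j with ⟨l, hl⟩ | ⟨l, hl⟩
  · rcases Nat.lt_or_ge l (k + 1) with hlk | hlk
    · have : walk ξ j ω = 0 := by
        rw [hl, show l + l = 2 * l by ring]
        exact walk_good_even ξ fun i hi hil => hgood i hi (by omega)
      rw [this]; norm_num
    · have hj' : j = 2 * (k + 1) := by omega
      rw [hj', walkE_end ξ hω]
      rcases he with rfl | rfl <;> norm_num
  · have hll : l ≤ k := by omega
    have h0 : walk ξ (2 * l) ω = 0 :=
      walk_good_even ξ fun i hi hil => hgood i hi (by omega)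
    have hmem := (mem_cylGen_iff ξ _ _ ω).mp hω (2 * l + 1) (by omega) (by omega)
    rw [hl, walk_succ', h0, hmem]
    rcases csgnE_cases he (k + 1) m (2 * l + 1) with h | h <;> rw [h] <;> norm_num

end Events


section MeasLayer
variable {Ω : Type*} [MeasurableSpace Ω] (P : Measure Ω) (ξ : ℕ → Ω → ℤ)

/-- measurability of `valf` etc. w.r.t. any σ-algebra making the relevant steps measurable. -/
lemma measurable_bitf {m' : MeasurableSpace Ω} {j : ℕ}
    (h : Measurable[m'] (ξ (2 * j - 1))) : Measurable[m'] (bitf ξ j) := by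
  unfold bitf
  exact Measurable.ite (h (measurableSet_singleton 1)) measurable_const measurable_const

lemma measurable_valf {m' : MeasurableSpace Ω} {k : ℕ}
    (h : ∀ i, 1 ≤ i → i ≤ 2 * k → Measurable[m'] (ξ i)) :
    Measurable[m'] (valf ξ k) := by
  induction k with
  | zero => exact measurable_const
  | succ k ih =>
    have h1 : Measurable[m'] (valf ξ k) := ih fun i hi1 hi2 => h i hi1 (by omega)
    have h2 : Measurable[m'] (bitf ξ (k + 1)) :=
      measurable_bitf ξ (h (2 * (k + 1) - 1) (by omega) (by omega))
    exact (h1.const_mul 2).add h2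

lemma measurableSet_goodf {m' : MeasurableSpace Ω} {k : ℕ}
    (h : ∀ i, 1 ≤ i → i ≤ 2 * k → Measurable[m'] (ξ i)) (hk : 1 ≤ k) :
    MeasurableSet[m'] {ω | goodf ξ k ω} := by
  have h1 : Measurable[m'] (ξ (2 * k - 1)) := h _ (by omega) (by omega)
  have h2 : Measurable[m'] (ξ (2 * k)) := h _ (by omega) (by omega)
  have : {ω | goodf ξ k ω} =
      (((ξ (2 * k - 1)) ⁻¹' {1}) ∩ ((ξ (2 * k)) ⁻¹' {-1})) ∪
        (((ξ (2 * k - 1)) ⁻¹' {-1}) ∩ ((ξ (2 * k)) ⁻¹' {1})) := by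
    ext ω; simp [goodf]
  rw [this]
  exact ((h1 (measurableSet_singleton _)).inter (h2 (measurableSet_singleton _))).union
    ((h1 (measurableSet_singleton _)).inter (h2 (measurableSet_singleton _)))

lemma measurableSet_badf (a : ℕ → ℕ) {m' : MeasurableSpace Ω} {k : ℕ}
    (h : ∀ i, 1 ≤ i → i ≤ 2 * k → Measurable[m'] (ξ i)) (hk : 1 ≤ k) :
    MeasurableSet[m'] {ω | badf ξ a k ω} := by
  have : {ω | badf ξ a k ω} =
      {ω | goodf ξ k ω}ᶜ ∪ (valf ξ k) ⁻¹' {x | x < a k} := by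
    ext ω; simp [badf]
  rw [this]
  exact ((measurableSet_goodf ξ h hk).compl).union
    ((measurable_valf ξ h) (by trivial))

lemma measurableSet_stopN_le (a : ℕ → ℕ) {m' : MeasurableSpace Ω} {n : ℕ}
    (h : ∀ i, 1 ≤ i → i ≤ 2 * n → Measurable[m'] (ξ i)) :
    MeasurableSet[m'] {ω | stopN ξ a ω ≤ (n : ℕ∞)} := by
  have : {ω | stopN ξ a ω ≤ (n : ℕ∞)} =
      ⋃ k ∈ Set.Icc 1 n, {ω | badf ξ a k ω} := by
    ext ω
    simp only [Set.mem_setOf_eq, stopN_le_iff, Set.mem_iUnion, Set.mem_Icc]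
    constructor
    · rintro ⟨k, h1, h2, h3⟩; exact ⟨k, ⟨h1, h2⟩, h3⟩
    · rintro ⟨k, ⟨h1, h2⟩, h3⟩; exact ⟨k, h1, h2, h3⟩
  rw [this]
  refine Set.Finite.measurableSet_biUnion (Set.finite_Icc 1 n) fun k hk => ?_
  obtain ⟨hk1, hk2⟩ := hk
  exact measurableSet_badf ξ a (fun i hi1 hi2 => h i hi1 (by omega)) hk1

lemma measurable_stopN (a : ℕ → ℕ) (hm : ∀ k, Measurable (ξ k)) :
    Measurable (stopN ξ a) := by
  have hle : ∀ n : ℕ, MeasurableSet {ω | stopN ξ a ω ≤ (n : ℕ∞)} := fun n =>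
    measurableSet_stopN_le ξ a fun i _ _ => hm i
  refine measurable_to_countable' fun x => ?_
  cases x with
  | top =>
    have : (stopN ξ a) ⁻¹' {⊤} = ⋂ n : ℕ, {ω | stopN ξ a ω ≤ (n : ℕ∞)}ᶜ := by
      ext ω
      simp only [Set.mem_preimage, Set.mem_singleton_iff, Set.mem_iInter, Set.mem_compl_iff,
        Set.mem_setOf_eq]
      constructor
      · intro h n hn; rw [h] at hn; simp at hn
      · intro h
        by_contra hne
        obtain ⟨n, hn⟩ := WithTop.ne_top_iff_exists.mp hne
        refine h n ?_
        exact le_of_eq hn.symm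

    rw [this]
    exact MeasurableSet.iInter fun n => (hle n).compl
  | coe n =>
    have : (stopN ξ a) ⁻¹' {(n : ℕ∞)} =
        {ω | stopN ξ a ω ≤ (n : ℕ∞)} \ ⋃ j ∈ Finset.range n, {ω | stopN ξ a ω ≤ (j : ℕ∞)} := by
      ext ω
      simp only [Set.mem_preimage, Set.mem_singleton_iff, Set.mem_diff, Set.mem_iUnion,
        Set.mem_setOf_eq, Finset.mem_range]
      constructor
      · intro h
        refine ⟨le_of_eq h, ?_⟩
        rintro ⟨j, hj, hle⟩
        rw [h] at hle
        have : n ≤ j := by exact_mod_cast hle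
        omega
      · rintro ⟨h1, h2⟩
        have hnt : stopN ξ a ω ≠ ⊤ := fun htop => by rw [htop] at h1; simp at h1
        rcases WithTop.ne_top_iff_exists.mp hnt with ⟨j, hj⟩
        rw [← hj] at h1 ⊢
        have hjn : j ≤ n := by
          have : (j : ℕ∞) ≤ (n : ℕ∞) := h1
          exact_mod_cast this
        rcases Nat.lt_or_ge j n with hlt | hge
        · exact absurd ⟨j, hlt, le_of_eq hj.symm⟩ h2
        · have : j = n := by omega
          rw [this]
          rfl

    rw [this]
    exact (hle n).diff
      (Set.Finite.measurableSet_biUnion (Finset.finite_toSet _) fun j _ => hle j)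

variable (W : IsSSRW P ξ)
include W

lemma prob_cylGen (n : ℕ) (σ : ℕ → ℤ) (hσ : ∀ i, 1 ≤ i → i ≤ n → σ i = 1 ∨ σ i = -1) :
    P (cylGen ξ n σ) = (2 : ℝ≥0∞)⁻¹ ^ n := by
  have hmeas : ∀ i ∈ Finset.Icc 1 n,
      MeasurableSet[MeasurableSpace.comap (ξ i) inferInstance] {ω | ξ i ω = σ i} :=
    fun i _ => ⟨{σ i}, measurableSet_singleton _, by ext ω; simp⟩
  have hprod := W.indep.meas_biInter (S := Finset.Icc 1 n)
    (s := fun i => {ω | ξ i ω = σ i}) hmeas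
  rw [cylGen, hprod]
  have : ∀ i ∈ Finset.Icc 1 n, P {ω | ξ i ω = σ i} = (2 : ℝ≥0∞)⁻¹ := by
    intro i hi
    rw [Finset.mem_Icc] at hi
    rcases hσ i hi.1 hi.2 with h | h <;> rw [h]
    · rw [W.up i]; rw [one_div]
    · rw [W.down i]; rw [one_div]
  rw [Finset.prod_congr rfl this, Finset.prod_const, Nat.card_Icc]
  norm_num

end MeasLayer

lemma tsum_conv {f : ℕ → ℕ} {x : ℝ}
    (hx : HasSum (fun k => (f k : ℝ) * (4 : ℝ)⁻¹ ^ (k + 1)) x) :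
    (∑' k, (f k : ℝ≥0∞) * (2 : ℝ≥0∞)⁻¹ ^ (2 * (k + 1))) = ENNReal.ofReal x := by
  have hterm : ∀ k, (f k : ℝ≥0∞) * (2 : ℝ≥0∞)⁻¹ ^ (2 * (k + 1))
      = ENNReal.ofReal ((f k : ℝ) * (4 : ℝ)⁻¹ ^ (k + 1)) := by
    intro k
    rw [ENNReal.ofReal_mul (by positivity), ENNReal.ofReal_pow (by norm_num),
      ENNReal.ofReal_natCast]
    congr 1
    rw [pow_mul]
    congr 1
    rw [ENNReal.ofReal_inv_of_pos (by norm_num), ← ENNReal.inv_pow]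
    norm_num
  rw [tsum_congr hterm,
    ← ENNReal.ofReal_tsum_of_nonneg (fun k => by positivity) hx.summable, hx.tsum_eq]


section Law
variable {Ω : Type*} [MeasurableSpace Ω]

/-- stage-`k+1` stop-at-0 event. -/
def stage0 (ξ : ℕ → Ω → ℤ) (p : ℝ) (k : ℕ) : Set Ω :=
  ⋃ m ∈ (Finset.Ico (2 * afun p k) (afun p (k + 1)) : Finset ℕ), evA ξ (k + 1) m

/-- stage-`k+1` exit event (`e = 1` up, `e = -1` down). -/
def stageE (ξ : ℕ → Ω → ℤ) (p : ℝ) (e : ℤ) (k : ℕ) : Set Ω :=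
  ⋃ m ∈ (Finset.Ico (afun p k) (2 ^ k) : Finset ℕ), evE ξ e (k + 1) m

def SS0 (ξ : ℕ → Ω → ℤ) (p : ℝ) : Set Ω := ⋃ k, stage0 ξ p k
def SSE (ξ : ℕ → Ω → ℤ) (p : ℝ) (e : ℤ) : Set Ω := ⋃ k, stageE ξ p e k

variable (P : Measure Ω) (ξ : ℕ → Ω → ℤ) (W : IsSSRW P ξ) {p : ℝ}
variable (hp : p ∈ Set.Icc (0 : ℝ) (1 / 6))

section AProps
include hp

lemma haA' : ∀ j, 2 * afun p j ≤ afun p (j + 1) := fun j => by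
  have := afun_succ hp j; omega

lemma haU' : ∀ k, afun p k ≤ 2 ^ k := fun k => by
  have := afun_add_sfun hp k; omega

/-- membership label for `stage0`. -/
lemma mem_stage0 {k : ℕ} {ω : Ω} (hω : ω ∈ stage0 ξ p k) :
    stopN ξ (afun p) ω = ((k + 1 : ℕ) : ℕ∞) ∧ goodf ξ (k + 1) ω ∧
      (∃ m, 2 * afun p k ≤ m ∧ m < afun p (k + 1) ∧ valf ξ (k + 1) ω = m) ∧
      walk ξ (2 * (k + 1)) ω = 0 ∧ (∀ j, j ≤ 2 * (k + 1) → |walk ξ j ω| ≤ 2) := by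
  simp only [stage0, Set.mem_iUnion, Finset.mem_coe, Finset.mem_Ico] at hω
  obtain ⟨m, ⟨hm1, hm2⟩, hmem⟩ := hω
  obtain ⟨h1, h2, h3⟩ := labelA ξ (afun p) (afun_zero p) (haA' hp) (haU' hp) hm1 hm2 hmem
  exact ⟨h1, h3, ⟨m, hm1, hm2, h2⟩, walkA_end ξ hmem, walkA_bound ξ hmem⟩

/-- membership label for `stageE`. -/
lemma mem_stageE {e : ℤ} (he : e = 1 ∨ e = -1) {k : ℕ} {ω : Ω}
    (hω : ω ∈ stageE ξ p e k) :
    stopN ξ (afun p) ω = ((k + 1 : ℕ) : ℕ∞) ∧ ξ (2 * k + 1) ω = e ∧ ξ (2 * k + 2) ω = e ∧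
      (∃ m, afun p k ≤ m ∧ m < 2 ^ k ∧ valf ξ k ω = m) ∧
      walk ξ (2 * (k + 1)) ω = 2 * e ∧ (∀ j, j ≤ 2 * (k + 1) → |walk ξ j ω| ≤ 2) := by
  simp only [stageE, Set.mem_iUnion, Finset.mem_coe, Finset.mem_Ico] at hω
  obtain ⟨m, ⟨hm1, hm2⟩, hmem⟩ := hω
  obtain ⟨h1, h2, h3, h4⟩ :=
    labelE ξ (afun p) (afun_zero p) (haA' hp) (haU' hp) he hm1 hm2 hmem
  exact ⟨h1, h3, h4, ⟨m, hm1, hm2, h2⟩, walkE_end ξ hmem, walkE_bound ξ he hmem⟩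

/-- the three families are pairwise disjoint in all indices. -/
lemma disj_stage0_stage0 {k k' : ℕ} (hkk : k ≠ k') :
    Disjoint (stage0 ξ p k) (stage0 ξ p k') := by
  rw [Set.disjoint_left]
  intro ω h1 h2
  have e1 := (mem_stage0 ξ hp h1).1
  have e2 := (mem_stage0 ξ hp h2).1
  rw [e1] at e2
  have : k + 1 = k' + 1 := by exact_mod_cast e2
  omega

lemma disj_stageE_stageE {e e' : ℤ} (he : e = 1 ∨ e = -1) (he' : e' = 1 ∨ e' = -1)
    {k k' : ℕ} (h : k ≠ k' ∨ e ≠ e') :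
    Disjoint (stageE ξ p e k) (stageE ξ p e' k') := by
  rw [Set.disjoint_left]
  intro ω h1 h2
  have e1 := mem_stageE ξ hp he h1
  have e2 := mem_stageE ξ hp he' h2
  have hk : k = k' := by
    have := e1.1; rw [e2.1] at this
    have : (k' + 1 : ℕ) = (k + 1 : ℕ) := by exact_mod_cast this
    omega
  subst hk
  rcases h with h | h
  · exact h rfl
  · apply h
    rw [← e1.2.1, ← e2.2.1]

lemma disj_stage0_stageE {e : ℤ} (he : e = 1 ∨ e = -1) {k k' : ℕ} :
    Disjoint (stage0 ξ p k) (stageE ξ p e k') := by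
  rw [Set.disjoint_left]
  intro ω h1 h2
  have e1 := mem_stage0 ξ hp h1
  have e2 := mem_stageE ξ hp he h2
  have hk : k = k' := by
    have := e1.1; rw [e2.1] at this
    have : (k' + 1 : ℕ) = (k + 1 : ℕ) := by exact_mod_cast this
    omega
  subst hk
  have hg := e1.2.1
  rw [goodf, show 2 * (k + 1) - 1 = 2 * k + 1 by omega,
    show 2 * (k + 1) = 2 * k + 2 by omega] at hg
  have ha := e2.2.1
  have hb := e2.2.2.1
  rcases he with rfl | rfl <;> rcases hg with ⟨u1, u2⟩ | ⟨u1, u2⟩ <;>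
    rw [ha] at u1 <;> first | omega | (rw [hb] at u2; omega)

end AProps

lemma measurableSet_evA (hm : ∀ i, Measurable (ξ i)) (k m : ℕ) :
    MeasurableSet (evA ξ k m) := measurableSet_cylGen ξ hm _ _

lemma measurableSet_evE (hm : ∀ i, Measurable (ξ i)) (e : ℤ) (k m : ℕ) :
    MeasurableSet (evE ξ e k m) := measurableSet_cylGen ξ hm _ _

include W

lemma prob_evA (k m : ℕ) : P (evA ξ k m) = (2 : ℝ≥0∞)⁻¹ ^ (2 * k) :=
  prob_cylGen P ξ W (2 * k) _ fun i _ _ => csgnA_cases k m i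

lemma prob_evE {e : ℤ} (he : e = 1 ∨ e = -1) (k m : ℕ) :
    P (evE ξ e k m) = (2 : ℝ≥0∞)⁻¹ ^ (2 * k) :=
  prob_cylGen P ξ W (2 * k) _ fun i _ _ => csgnE_cases he k m i

include hp

lemma prob_stage0 (k : ℕ) :
    P (stage0 ξ p k) = (cfun p k : ℝ≥0∞) * (2 : ℝ≥0∞)⁻¹ ^ (2 * (k + 1)) := by
  rw [stage0, measure_biUnion_finset ?disj fun m _ => measurableSet_evA ξ W.meas (k+1) m]
  case disj =>
    intro m hm m' hm' hmm
    rw [Finset.mem_coe, Finset.mem_Ico] at hm hm'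
    rw [Function.onFun, Set.disjoint_left]
    intro ω h1 h2
    have v1 := (labelA ξ (afun p) (afun_zero p) (haA' hp) (haU' hp) hm.1 hm.2 h1).2.1
    have v2 := (labelA ξ (afun p) (afun_zero p) (haA' hp) (haU' hp) hm'.1 hm'.2 h2).2.1
    rw [v1] at v2
    exact hmm v2
  have hcongr : ∀ m ∈ Finset.Ico (2 * afun p k) (afun p (k + 1)),
      P (evA ξ (k + 1) m) = (2 : ℝ≥0∞)⁻¹ ^ (2 * (k + 1)) := fun m _ =>
    prob_evA P ξ W (k + 1) m
  rw [Finset.sum_congr rfl hcongr, Finset.sum_const, Nat.card_Ico, nsmul_eq_mul]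
  congr 1
  have := afun_succ hp k
  have : afun p (k + 1) - 2 * afun p k = cfun p k := by omega
  rw [this]

lemma prob_stageE {e : ℤ} (he : e = 1 ∨ e = -1) (k : ℕ) :
    P (stageE ξ p e k) = (sfun p k : ℝ≥0∞) * (2 : ℝ≥0∞)⁻¹ ^ (2 * (k + 1)) := by
  rw [stageE, measure_biUnion_finset ?disj fun m _ => measurableSet_evE ξ W.meas e (k+1) m]
  case disj =>
    intro m hm m' hm' hmm
    rw [Finset.mem_coe, Finset.mem_Ico] at hm hm'
    rw [Function.onFun, Set.disjoint_left]
    intro ω h1 h2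
    have v1 := (labelE ξ (afun p) (afun_zero p) (haA' hp) (haU' hp) he hm.1 hm.2 h1).2.1
    have v2 := (labelE ξ (afun p) (afun_zero p) (haA' hp) (haU' hp) he hm'.1 hm'.2 h2).2.1
    rw [v1] at v2
    exact hmm v2
  have hcongr : ∀ m ∈ Finset.Ico (afun p k) (2 ^ k),
      P (evE ξ e (k + 1) m) = (2 : ℝ≥0∞)⁻¹ ^ (2 * (k + 1)) := fun m _ =>
    prob_evE P ξ W he (k + 1) m
  rw [Finset.sum_congr rfl hcongr, Finset.sum_const, Nat.card_Ico, nsmul_eq_mul]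
  congr 1
  have := afun_add_sfun hp k
  have : 2 ^ k - afun p k = sfun p k := by omega
  rw [this]

lemma measurableSet_stage0 (k : ℕ) : MeasurableSet (stage0 ξ p k) :=
  Set.Finite.measurableSet_biUnion (Finset.finite_toSet _) fun m _ =>
    measurableSet_evA ξ W.meas (k + 1) m

lemma measurableSet_stageE (e : ℤ) (k : ℕ) : MeasurableSet (stageE ξ p e k) :=
  Set.Finite.measurableSet_biUnion (Finset.finite_toSet _) fun m _ =>
    measurableSet_evE ξ W.meas e (k + 1) m

lemma measurableSet_SS0 : MeasurableSet (SS0 ξ p) :=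
  MeasurableSet.iUnion fun k => measurableSet_stage0 P ξ W hp k

lemma measurableSet_SSE (e : ℤ) : MeasurableSet (SSE ξ p e) :=
  MeasurableSet.iUnion fun k => measurableSet_stageE P ξ W hp e k

lemma prob_SS0 : P (SS0 ξ p) = ENNReal.ofReal p := by
  rw [SS0, measure_iUnion (fun k k' hkk => disj_stage0_stage0 ξ hp hkk)
    (fun k => measurableSet_stage0 P ξ W hp k)]
  rw [tsum_congr (fun k => prob_stage0 P ξ W hp k)]
  exact tsum_conv (hasSum_c hp)

lemma prob_SSE {e : ℤ} (he : e = 1 ∨ e = -1) :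
    P (SSE ξ p e) = ENNReal.ofReal ((1 - p) / 2) := by
  rw [SSE, measure_iUnion (fun k k' hkk => disj_stageE_stageE ξ hp he he (Or.inl hkk))
    (fun k => measurableSet_stageE P ξ W hp e k)]
  rw [tsum_congr (fun k => prob_stageE P ξ W hp he k)]
  exact tsum_conv (hasSum_s hp)

end Law

section Law2
variable {Ω : Type*} [MeasurableSpace Ω]

/-- the almost sure event covering all stopping scenarios -/
def bigT (ξ : ℕ → Ω → ℤ) (p : ℝ) : Set Ω := (SS0 ξ p ∪ SSE ξ p 1) ∪ SSE ξ p (-1)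

variable (P : Measure Ω) (ξ : ℕ → Ω → ℤ) (W : IsSSRW P ξ) {p : ℝ}
variable (hp : p ∈ Set.Icc (0 : ℝ) (1 / 6))

lemma stopT_def (a : ℕ → ℕ) (ω : Ω) : stopT ξ a ω = 2 * stopN ξ a ω := rfl

lemma stopVal_def (τ : Ω → ℕ∞) (ω : Ω) : stopVal ξ τ ω = walk ξ (τ ω).toNat ω := rfl

include hp

lemma disj_SS0_SSE {e : ℤ} (he : e = 1 ∨ e = -1) : Disjoint (SS0 ξ p) (SSE ξ p e) := by
  rw [SS0, SSE, Set.disjoint_iUnion_left]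
  intro k
  rw [Set.disjoint_iUnion_right]
  intro k'
  exact disj_stage0_stageE ξ hp he

lemma disj_SSE_SSE' : Disjoint (SSE ξ p 1) (SSE ξ p (-1)) := by
  rw [SSE, SSE, Set.disjoint_iUnion_left]
  intro k
  rw [Set.disjoint_iUnion_right]
  intro k'
  exact disj_stageE_stageE ξ hp (Or.inl rfl) (Or.inr rfl) (Or.inr (by decide))

/-- stopping data on `stage0`. -/
lemma stopT_stage0 {k : ℕ} {ω : Ω} (hω : ω ∈ stage0 ξ p k) :
    (stopT ξ (afun p) ω).toNat = 2 * (k + 1) ∧ stopT ξ (afun p) ω ≠ ⊤ := by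
  have h := (mem_stage0 ξ hp hω).1
  rw [stopT_def, h]
  have h2 : (2 * (((k + 1 : ℕ)) : ℕ∞)) = ((2 * (k + 1) : ℕ) : ℕ∞) := by push_cast; ring
  rw [h2, ENat.toNat_coe]
  exact ⟨rfl, WithTop.coe_ne_top⟩

lemma stopT_stageE {e : ℤ} (he : e = 1 ∨ e = -1) {k : ℕ} {ω : Ω}
    (hω : ω ∈ stageE ξ p e k) :
    (stopT ξ (afun p) ω).toNat = 2 * (k + 1) ∧ stopT ξ (afun p) ω ≠ ⊤ := by
  have h := (mem_stageE ξ hp he hω).1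
  rw [stopT_def, h]
  have h2 : (2 * (((k + 1 : ℕ)) : ℕ∞)) = ((2 * (k + 1) : ℕ) : ℕ∞) := by push_cast; ring
  rw [h2, ENat.toNat_coe]
  exact ⟨rfl, WithTop.coe_ne_top⟩

lemma stopVal_SS0 {ω : Ω} (hω : ω ∈ SS0 ξ p) :
    stopVal ξ (stopT ξ (afun p)) ω = 0 := by
  obtain ⟨k, hk⟩ := Set.mem_iUnion.mp hω
  rw [stopVal_def, (stopT_stage0 ξ hp hk).1]
  exact (mem_stage0 ξ hp hk).2.2.2.1

lemma stopVal_SSE {e : ℤ} (he : e = 1 ∨ e = -1) {ω : Ω} (hω : ω ∈ SSE ξ p e) :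
    stopVal ξ (stopT ξ (afun p)) ω = 2 * e := by
  obtain ⟨k, hk⟩ := Set.mem_iUnion.mp hω
  rw [stopVal_def, (stopT_stageE ξ hp he hk).1]
  exact (mem_stageE ξ hp he hk).2.2.2.2.1

include W

lemma measurableSet_bigT : MeasurableSet (bigT ξ p) :=
  ((measurableSet_SS0 P ξ W hp).union (measurableSet_SSE P ξ W hp 1)).union
    (measurableSet_SSE P ξ W hp (-1))

lemma prob_bigT : P (bigT ξ p) = 1 := by
  have h0 := hp.1
  have h1 : p ≤ 1 / 6 := hp.2
  rw [bigT,
    measure_union (Set.disjoint_union_left.mpr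
      ⟨disj_SS0_SSE ξ hp (Or.inr rfl), disj_SSE_SSE' ξ hp⟩) (measurableSet_SSE P ξ W hp (-1)),
    measure_union (disj_SS0_SSE ξ hp (Or.inl rfl)) (measurableSet_SSE P ξ W hp 1),
    prob_SS0 P ξ W hp, prob_SSE P ξ W hp (Or.inl rfl), prob_SSE P ξ W hp (Or.inr rfl),
    ← ENNReal.ofReal_add (by linarith) (by linarith),
    ← ENNReal.ofReal_add (by linarith) (by linarith)]
  rw [show p + (1 - p) / 2 + (1 - p) / 2 = 1 by ring, ENNReal.ofReal_one]

lemma prob_bigT_compl : P (bigT ξ p)ᶜ = 0 := by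
  haveI := W.isProb
  rw [measure_compl (measurableSet_bigT P ξ W hp) (measure_ne_top _ _),
    prob_bigT P ξ W hp, measure_univ, tsub_self]

lemma measurable_stopTtoNat : Measurable (fun ω => (stopT ξ (afun p) ω).toNat) := by
  have : (fun ω => (stopT ξ (afun p) ω).toNat)
      = (fun n : ℕ∞ => (2 * n).toNat) ∘ (stopN ξ (afun p)) := rfl
  rw [this]
  exact (measurable_of_countable _).comp (measurable_stopN ξ (afun p) W.meas)

lemma measurable_stopVal : Measurable (stopVal ξ (stopT ξ (afun p))) := by
  apply measurable_to_countable'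
  intro z
  have : stopVal ξ (stopT ξ (afun p)) ⁻¹' {z} =
      ⋃ n : ℕ, ((fun ω => (stopT ξ (afun p) ω).toNat) ⁻¹' {n}) ∩ (walk ξ n ⁻¹' {z}) := by
    ext ω
    simp only [Set.mem_preimage, Set.mem_singleton_iff, Set.mem_iUnion, Set.mem_inter_iff]
    constructor
    · intro h
      exact ⟨(stopT ξ (afun p) ω).toNat, rfl, h⟩
    · rintro ⟨n, hn, hz⟩
      rw [stopVal_def, hn]
      exact hz
  rw [this]
  exact MeasurableSet.iUnion fun n =>
    ((measurable_stopTtoNat P ξ W hp (measurableSet_singleton n)).inter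
      ((measurable_walk ξ W.meas n) (measurableSet_singleton z)))

lemma aefinite_stopT : AEFinite P (stopT ξ (afun p)) := by
  rw [AEFinite]
  rw [Filter.eventually_iff]
  apply Filter.mem_of_superset
    (compl_mem_ae_iff.mpr (prob_bigT_compl P ξ W hp) : (bigT ξ p)ᶜᶜ ∈ ae P)
  rw [compl_compl]
  rintro ω (hω | hω)
  · rcases hω with hω | hω
    · obtain ⟨k, hk⟩ := Set.mem_iUnion.mp hω
      exact lt_top_iff_ne_top.mpr (stopT_stage0 ξ hp hk).2
    · obtain ⟨k, hk⟩ := Set.mem_iUnion.mp hω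
      exact lt_top_iff_ne_top.mpr (stopT_stageE ξ hp (Or.inl rfl) hk).2
  · obtain ⟨k, hk⟩ := Set.mem_iUnion.mp hω
    exact lt_top_iff_ne_top.mpr (stopT_stageE ξ hp (Or.inr rfl) hk).2

lemma law_stopVal : Measure.map (stopVal ξ (stopT ξ (afun p))) P = muP p := by
  haveI := W.isProb
  apply Measure.ext
  intro s hs
  classical
  rw [Measure.map_apply (measurable_stopVal P ξ W hp) hs]
  set f := stopVal ξ (stopT ξ (afun p)) with hf
  have hsm : MeasurableSet (f ⁻¹' s) := measurable_stopVal P ξ W hp hs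
  have hsplit : P (f ⁻¹' s) =
      P (f ⁻¹' s ∩ SS0 ξ p) + P (f ⁻¹' s ∩ SSE ξ p 1) + P (f ⁻¹' s ∩ SSE ξ p (-1)) := by
    have h1 : P (f ⁻¹' s ∩ bigT ξ p) + P (f ⁻¹' s \ bigT ξ p) = P (f ⁻¹' s) :=
      measure_inter_add_diff _ (measurableSet_bigT P ξ W hp)
    have h2 : P (f ⁻¹' s \ bigT ξ p) = 0 :=
      measure_mono_null (fun ω h => h.2) (prob_bigT_compl P ξ W hp)
    have d1 : Disjoint (f ⁻¹' s ∩ SS0 ξ p) (f ⁻¹' s ∩ SSE ξ p 1) :=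
      (disj_SS0_SSE ξ hp (Or.inl rfl)).mono Set.inter_subset_right Set.inter_subset_right
    have d2 : Disjoint (f ⁻¹' s ∩ SS0 ξ p ∪ f ⁻¹' s ∩ SSE ξ p 1)
        (f ⁻¹' s ∩ SSE ξ p (-1)) := Set.disjoint_union_left.mpr
      ⟨(disj_SS0_SSE ξ hp (Or.inr rfl)).mono Set.inter_subset_right Set.inter_subset_right,
        (disj_SSE_SSE' ξ hp).mono Set.inter_subset_right Set.inter_subset_right⟩
    rw [← h1, h2, add_zero, bigT, Set.inter_union_distrib_left,
      Set.inter_union_distrib_left]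
    rw [measure_union d2 (hsm.inter (measurableSet_SSE P ξ W hp (-1))),
      measure_union d1 (hsm.inter (measurableSet_SSE P ξ W hp 1))]
  have hv0 : f ⁻¹' s ∩ SS0 ξ p = if (0 : ℤ) ∈ s then SS0 ξ p else ∅ := by
    split_ifs with h0
    · ext ω
      exact ⟨fun h => h.2, fun h => ⟨by
        rw [Set.mem_preimage, hf, stopVal_SS0 ξ hp h]; exact h0, h⟩⟩
    · ext ω
      simp only [Set.mem_inter_iff, Set.mem_preimage, Set.mem_empty_iff_false,
        iff_false, not_and]
      intro hpre hss
      rw [hf, stopVal_SS0 ξ hp hss] at hpre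
      exact h0 hpre
  have hv1 : f ⁻¹' s ∩ SSE ξ p 1 = if (2 : ℤ) ∈ s then SSE ξ p 1 else ∅ := by
    split_ifs with h0
    · ext ω
      exact ⟨fun h => h.2, fun h => ⟨by
        rw [Set.mem_preimage, hf, stopVal_SSE ξ hp (Or.inl rfl) h]; exact h0, h⟩⟩
    · ext ω
      simp only [Set.mem_inter_iff, Set.mem_preimage, Set.mem_empty_iff_false,
        iff_false, not_and]
      intro hpre hss
      rw [hf, stopVal_SSE ξ hp (Or.inl rfl) hss] at hpre
      norm_num at hpre
      exact h0 hpre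
  have hv2 : f ⁻¹' s ∩ SSE ξ p (-1) = if (-2 : ℤ) ∈ s then SSE ξ p (-1) else ∅ := by
    split_ifs with h0
    · ext ω
      exact ⟨fun h => h.2, fun h => ⟨by
        rw [Set.mem_preimage, hf, stopVal_SSE ξ hp (Or.inr rfl) h]; exact h0, h⟩⟩
    · ext ω
      simp only [Set.mem_inter_iff, Set.mem_preimage, Set.mem_empty_iff_false,
        iff_false, not_and]
      intro hpre hss
      rw [hf, stopVal_SSE ξ hp (Or.inr rfl) hss] at hpre
      norm_num at hpre
      exact h0 hpre
  rw [hsplit, hv0, hv1, hv2, muP]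
  rw [Measure.add_apply, Measure.smul_apply, Measure.smul_apply, Measure.add_apply,
    Measure.dirac_apply' _ hs, Measure.dirac_apply' _ hs, Measure.dirac_apply' _ hs]
  by_cases h0 : (0 : ℤ) ∈ s <;> by_cases h1 : (2 : ℤ) ∈ s <;> by_cases h2 : (-2 : ℤ) ∈ s <;>
    simp only [h0, h1, h2, if_true, if_false, Set.indicator_of_mem, Set.indicator_of_notMem,
      not_false_iff, measure_empty, prob_SS0 P ξ W hp, prob_SSE P ξ W hp (Or.inl rfl),
      prob_SSE P ξ W hp (Or.inr rfl), Pi.one_apply, smul_eq_mul, mul_one, mul_zero,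
      add_zero, zero_add, mul_add] <;> ring

end Law2


section Stopping
variable {Ω : Type*} [MeasurableSpace Ω]
variable (P : Measure Ω) (ξ : ℕ → Ω → ℤ) (W : IsSSRW P ξ) {p : ℝ}
variable (hp : p ∈ Set.Icc (0 : ℝ) (1 / 6))

lemma natFilt_apply (hm : ∀ k, Measurable (ξ k)) (n : ℕ) :
    natFilt ξ hm n = ⨆ k ∈ Set.Iic n, MeasurableSpace.comap (walk ξ k) inferInstance := rfl

lemma measurable_walk_natFilt (hm : ∀ k, Measurable (ξ k)) {k n : ℕ} (hk : k ≤ n) :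
    Measurable[natFilt ξ hm n] (walk ξ k) := by
  apply Measurable.of_comap_le
  rw [natFilt_apply]
  exact le_biSup (fun k => MeasurableSpace.comap (walk ξ k) inferInstance)
    (Set.mem_Iic.mpr hk)

lemma measurable_xi_natFilt (hm : ∀ k, Measurable (ξ k)) {i n : ℕ} (h1 : 1 ≤ i)
    (h2 : i ≤ n) : Measurable[natFilt ξ hm n] (ξ i) := by
  have heq : ξ i = fun ω => walk ξ i ω - walk ξ (i - 1) ω := by
    funext ω
    have h := walk_succ' ξ (i - 1) ω
    rw [show i - 1 + 1 = i by omega] at h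
    rw [h]; ring
  rw [heq]
  exact (measurable_walk_natFilt ξ hm h2).sub (measurable_walk_natFilt ξ hm (by omega))

lemma mincast_toNat (n m : ℕ) : (min ((n : ℕ) : ℕ∞) ((m : ℕ) : ℕ∞)).toNat = min n m := by
  cases Nat.le_total n m with
  | inl h => rw [min_eq_left (by exact_mod_cast h), ENat.toNat_coe, min_eq_left h]
  | inr h => rw [min_eq_right (by exact_mod_cast h), ENat.toNat_coe, min_eq_right h]

include W hp

lemma isStop_stopT : IsStop (natFilt ξ W.meas) (stopT ξ (afun p)) := by
  intro n
  have heq : {ω | stopT ξ (afun p) ω ≤ (n : ℕ∞)}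
      = {ω | stopN ξ (afun p) ω ≤ ((n / 2 : ℕ) : ℕ∞)} := by
    ext ω
    simp only [Set.mem_setOf_eq, stopT_def]
    cases hN : stopN ξ (afun p) ω with
    | top =>
      have htop : (2 : ℕ∞) * ⊤ = ⊤ := by
        exact ENat.mul_top (by norm_num)
      rw [htop]
      simp
    | coe k =>
      rw [show (2 * ((k : ℕ) : ℕ∞)) = ((2 * k : ℕ) : ℕ∞) by push_cast; ring]
      constructor
      · intro h
        have h' : 2 * k ≤ n := by exact_mod_cast h
        exact_mod_cast (by omega : k ≤ n / 2)
      · intro h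
        have h' : k ≤ n / 2 := by exact_mod_cast h
        exact_mod_cast (by omega : 2 * k ≤ n)
  rw [heq]
  exact measurableSet_stopN_le ξ (afun p) fun i hi1 hi2 =>
    measurable_xi_natFilt ξ W.meas hi1 (by omega)

omit W hp

lemma stopProc_zero (τ : Ω → ℕ∞) : stopProc ξ τ 0 = fun _ => 0 := by
  funext ω
  show ((walk ξ (min ((0 : ℕ) : ℕ∞) (τ ω)).toNat ω : ℤ) : ℝ) = 0
  rw [show ((0 : ℕ) : ℕ∞) = 0 by rfl, min_eq_left zero_le]
  rw [show (0 : ℕ∞).toNat = 0 by rfl, walk_zero']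
  norm_num

lemma stopProc_succ (τ : Ω → ℕ∞) (n : ℕ) :
    stopProc ξ τ (n + 1) = stopProc ξ τ n +
      Set.indicator ({ω | τ ω ≤ (n : ℕ∞)}ᶜ) (fun ω => ((ξ (n + 1) ω : ℤ) : ℝ)) := by
  funext ω
  show ((walk ξ (min ((n + 1 : ℕ) : ℕ∞) (τ ω)).toNat ω : ℤ) : ℝ)
    = ((walk ξ (min ((n : ℕ) : ℕ∞) (τ ω)).toNat ω : ℤ) : ℝ) + _
  by_cases hτ : τ ω ≤ (n : ℕ∞)
  · have hmin1 : min ((n + 1 : ℕ) : ℕ∞) (τ ω) = τ ω :=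
      min_eq_right (le_trans hτ (by exact_mod_cast Nat.le_succ n))
    have hmin2 : min ((n : ℕ) : ℕ∞) (τ ω) = τ ω := min_eq_right hτ
    rw [hmin1, hmin2, Set.indicator_of_notMem (by simpa using hτ), add_zero]
  · have hlt : (n : ℕ∞) < τ ω := not_le.mp hτ
    have hτ' : ((n + 1 : ℕ) : ℕ∞) ≤ τ ω := by
      have := Order.add_one_le_of_lt hlt
      rwa [show ((n : ℕ) : ℕ∞) + 1 = ((n + 1 : ℕ) : ℕ∞) by push_cast; ring] at this
    have hmin1 : min ((n + 1 : ℕ) : ℕ∞) (τ ω) = ((n + 1 : ℕ) : ℕ∞) := min_eq_left hτ'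
    have hmin2 : min ((n : ℕ) : ℕ∞) (τ ω) = ((n : ℕ) : ℕ∞) :=
      min_eq_left (le_trans (by exact_mod_cast Nat.le_succ n) hτ')
    rw [hmin1, hmin2, ENat.toNat_coe, ENat.toNat_coe,
      Set.indicator_of_mem (by simpa using hτ), walk_succ']
    push_cast
    ring

include W hp

lemma adapted_stopProc :
    StronglyAdapted (natFilt ξ W.meas) (stopProc ξ (stopT ξ (afun p))) := by
  intro n
  induction n with
  | zero =>
    rw [stopProc_zero]
    exact stronglyMeasurable_const
  | succ n ih =>
    rw [stopProc_succ]
    have hD : MeasurableSet[natFilt ξ W.meas (n + 1)] {ω | stopT ξ (afun p) ω ≤ (n : ℕ∞)}ᶜ :=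
      (((natFilt ξ W.meas).mono (Nat.le_succ n)) _ (isStop_stopT P ξ W hp n)).compl
    refine (ih.mono ((natFilt ξ W.meas).mono (Nat.le_succ n))).add ?_
    refine StronglyMeasurable.indicator ?_ hD
    exact ((measurable_of_countable (fun z : ℤ => (z : ℝ))).comp
      (measurable_xi_natFilt ξ W.meas (by omega) le_rfl)).stronglyMeasurable

lemma stopProc_bound_of {k : ℕ} {ω : Ω}
    (hN : stopN ξ (afun p) ω = ((k + 1 : ℕ) : ℕ∞))
    (hb : ∀ j, j ≤ 2 * (k + 1) → |walk ξ j ω| ≤ 2) :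
    ∀ n, |stopProc ξ (stopT ξ (afun p)) n ω| ≤ 2 := by
  intro n
  have hτ : stopT ξ (afun p) ω = ((2 * (k + 1) : ℕ) : ℕ∞) := by
    rw [stopT_def, hN]; push_cast; ring
  show |((walk ξ (min ((n : ℕ) : ℕ∞) (stopT ξ (afun p) ω)).toNat ω : ℤ) : ℝ)| ≤ 2
  rw [hτ, mincast_toNat]
  have := hb (min n (2 * (k + 1))) (min_le_right _ _)
  exact_mod_cast this

lemma bigT_ae : bigT ξ p ∈ ae P := mem_ae_iff.mpr (prob_bigT_compl P ξ W hp)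

lemma stopProc_ae_bound :
    ∀ᵐ ω ∂P, ∀ n, |stopProc ξ (stopT ξ (afun p)) n ω| ≤ 2 := by
  filter_upwards [bigT_ae P ξ W hp] with ω hω
  rcases hω with hω | hω
  · rcases hω with hω | hω
    · obtain ⟨k, hk⟩ := Set.mem_iUnion.mp hω
      exact stopProc_bound_of P ξ W hp (mem_stage0 ξ hp hk).1 (mem_stage0 ξ hp hk).2.2.2.2
    · obtain ⟨k, hk⟩ := Set.mem_iUnion.mp hω
      exact stopProc_bound_of P ξ W hp (mem_stageE ξ hp (Or.inl rfl) hk).1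
        (mem_stageE ξ hp (Or.inl rfl) hk).2.2.2.2.2
  · obtain ⟨k, hk⟩ := Set.mem_iUnion.mp hω
    exact stopProc_bound_of P ξ W hp (mem_stageE ξ hp (Or.inr rfl) hk).1
      (mem_stageE ξ hp (Or.inr rfl) hk).2.2.2.2.2

lemma integrable_stopProc (n : ℕ) :
    Integrable (stopProc ξ (stopT ξ (afun p)) n) P := by
  haveI := W.isProb
  refine (integrable_const (2 : ℝ)).mono'
    (((adapted_stopProc P ξ W hp n).mono ((natFilt ξ W.meas).le n)).aestronglyMeasurable) ?_
  filter_upwards [stopProc_ae_bound P ξ W hp] with ω hω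
  rw [Real.norm_eq_abs]
  exact hω n

lemma xi_ae_pm (i : ℕ) : ∀ᵐ ω ∂P, ξ i ω = 1 ∨ ξ i ω = -1 := by
  haveI := W.isProb
  rw [ae_iff]
  have hset : {ω | ¬(ξ i ω = 1 ∨ ξ i ω = -1)}
      = ({ω | ξ i ω = 1} ∪ {ω | ξ i ω = -1})ᶜ := by
    ext ω; simp [not_or]
  have hA : MeasurableSet {ω | ξ i ω = 1} := W.meas i (measurableSet_singleton 1)
  have hB : MeasurableSet {ω | ξ i ω = -1} := W.meas i (measurableSet_singleton (-1))
  have hdisj : Disjoint {ω | ξ i ω = 1} {ω | ξ i ω = -1} := by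
    rw [Set.disjoint_left]
    intro ω h1 h2
    rw [Set.mem_setOf_eq] at h1 h2
    rw [h1] at h2
    norm_num at h2
  rw [hset, measure_compl (hA.union hB) (measure_ne_top _ _),
    measure_union hdisj hB, W.up i, W.down i, measure_univ]
  rw [ENNReal.add_halves]
  exact tsub_self 1

lemma integral_xi (i : ℕ) : ∫ ω, ((ξ i ω : ℤ) : ℝ) ∂P = 0 := by
  haveI := W.isProb
  set A := {ω | ξ i ω = 1} with hAdef
  set B := {ω | ξ i ω = -1} with hBdef
  have hA : MeasurableSet A := W.meas i (measurableSet_singleton 1)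
  have hB : MeasurableSet B := W.meas i (measurableSet_singleton (-1))
  have hcongr : (fun ω => ((ξ i ω : ℤ) : ℝ)) =ᵐ[P]
      (fun ω => A.indicator (fun _ => (1 : ℝ)) ω + B.indicator (fun _ => (-1 : ℝ)) ω) := by
    filter_upwards [xi_ae_pm P ξ W hp i] with ω hω
    rcases hω with h | h
    · rw [Set.indicator_of_mem (by exact h : ω ∈ A),
        Set.indicator_of_notMem (by rw [hBdef, Set.mem_setOf_eq, h]; norm_num), h]
      norm_num
    · rw [Set.indicator_of_notMem (by rw [hAdef, Set.mem_setOf_eq, h]; norm_num),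
        Set.indicator_of_mem (by exact h : ω ∈ B), h]
      norm_num
  rw [integral_congr_ae hcongr,
    integral_add ((integrable_const _).indicator hA) ((integrable_const _).indicator hB),
    integral_indicator_const _ hA, integral_indicator_const _ hB, measureReal_def,
    measureReal_def, W.up i, W.down i]
  norm_num

lemma condexp_xi (n : ℕ) :
    P[(fun ω => ((ξ (n + 1) ω : ℤ) : ℝ)) | natFilt ξ W.meas n] =ᵐ[P] fun _ => 0 := by
  haveI := W.isProb
  have hle1 : MeasurableSpace.comap (ξ (n + 1)) inferInstance ≤ _ := (W.meas (n + 1)).comap_le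
  have hle2 := (natFilt ξ W.meas).le n
  have hindep : Indep (MeasurableSpace.comap (ξ (n + 1)) inferInstance)
      (natFilt ξ W.meas n) P := by
    have h2 := indep_biSup_compl (fun i => (W.meas i).comap_le) W.indep.iIndep {n + 1}
    have hsing : (⨆ i ∈ ({n + 1} : Set ℕ), MeasurableSpace.comap (ξ i) inferInstance)
        = MeasurableSpace.comap (ξ (n + 1)) inferInstance := by simp
    rw [hsing] at h2
    refine indep_of_indep_of_le_right h2 ?_
    rw [natFilt_apply]
    refine iSup₂_le fun k hk => ?_
    refine measurable_iff_comap_le.mp ?_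
    apply Finset.measurable_sum
    intro i hi
    rw [Finset.mem_Icc] at hi
    apply Measurable.of_comap_le
    refine le_biSup (fun i => MeasurableSpace.comap (ξ i) inferInstance) ?_
    simp only [Set.mem_compl_iff, Set.mem_singleton_iff]
    have hkn : k ≤ n := hk
    omega
  have hsm : StronglyMeasurable[MeasurableSpace.comap (ξ (n + 1)) inferInstance]
      (fun ω => ((ξ (n + 1) ω : ℤ) : ℝ)) :=
    ((measurable_of_countable (fun z : ℤ => (z : ℝ))).comp
      (Measurable.of_comap_le le_rfl)).stronglyMeasurable
  refine (condExp_indep_eq hle1 hle2 hsm hindep).trans ?_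
  rw [integral_xi P ξ W hp (n + 1)]

lemma martingale_stopProc :
    Martingale (stopProc ξ (stopT ξ (afun p))) (natFilt ξ W.meas) P := by
  haveI := W.isProb
  refine martingale_nat (adapted_stopProc P ξ W hp) (integrable_stopProc P ξ W hp)
    fun n => ?_
  set τ := stopT ξ (afun p) with hτdef
  set D := {ω | τ ω ≤ (n : ℕ∞)}ᶜ with hDdef
  set g := fun ω => ((ξ (n + 1) ω : ℤ) : ℝ) with hgdef
  have hDmeas0 : MeasurableSet D :=
    (((natFilt ξ W.meas).le n) _ (isStop_stopT P ξ W hp n)).compl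
  have hDmeasF : MeasurableSet[natFilt ξ W.meas n] D :=
    ((isStop_stopT P ξ W hp n)).compl
  have hintg : Integrable g P := by
    refine (integrable_const (1 : ℝ)).mono'
      ((measurable_of_countable (fun z : ℤ => (z : ℝ))).comp (W.meas (n + 1))
        ).aestronglyMeasurable ?_
    filter_upwards [xi_ae_pm P ξ W hp (n + 1)] with ω hω
    rcases hω with h | h <;> rw [hgdef] <;> simp only [h] <;> norm_num
  have hintD : Integrable (D.indicator g) P := hintg.indicator hDmeas0
  have hint1 : Integrable (stopProc ξ τ n) P := integrable_stopProc P ξ W hp n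
  rw [stopProc_succ]
  refine EventuallyEq.symm ((condExp_add hint1 hintD _).trans ?_)
  have h1 : P[stopProc ξ τ n | natFilt ξ W.meas n] = stopProc ξ τ n :=
    condExp_of_stronglyMeasurable ((natFilt ξ W.meas).le n)
      (adapted_stopProc P ξ W hp n) hint1
  have hmul : D.indicator g = (D.indicator (fun _ => (1 : ℝ))) * g := by
    funext ω
    by_cases hω : ω ∈ D <;> simp [hω]
  have h2 : P[D.indicator g | natFilt ξ W.meas n] =ᵐ[P] fun _ => (0 : ℝ) := by
    rw [hmul]
    refine (condExp_mul_of_stronglyMeasurable_left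
      (stronglyMeasurable_const.indicator hDmeasF)
      (by rw [← hmul]; exact hintD) hintg).trans ?_
    filter_upwards [condexp_xi P ξ W hp n] with ω hω
    show D.indicator (fun _ => (1 : ℝ)) ω * (P[g | natFilt ξ W.meas n]) ω = 0
    rw [show (P[g | natFilt ξ W.meas n]) ω = 0 from hω]
    rw [mul_zero]
  rw [h1]
  filter_upwards [h2] with ω hω
  show stopProc ξ τ n ω + (P[D.indicator g | natFilt ξ W.meas n]) ω = stopProc ξ τ n ω
  rw [show (P[D.indicator g | natFilt ξ W.meas n]) ω = 0 from hω, add_zero]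

lemma ui_stopProc : UniformIntegrable (stopProc ξ (stopT ξ (afun p))) 1 P := by
  haveI := W.isProb
  refine uniformIntegrable_of le_rfl ENNReal.one_ne_top
    (fun n => ((adapted_stopProc P ξ W hp n).mono
      ((natFilt ξ W.meas).le n)).aestronglyMeasurable)
    fun ε hε => ⟨3, fun n => ?_⟩
  have hzero : {x | (3 : ℝ≥0) ≤ ‖stopProc ξ (stopT ξ (afun p)) n x‖₊}.indicator
      (stopProc ξ (stopT ξ (afun p)) n) =ᵐ[P] 0 := by
    filter_upwards [stopProc_ae_bound P ξ W hp] with ω hω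
    have h2 := hω n
    refine Set.indicator_of_notMem ?_ _
    intro hmem
    rw [Set.mem_setOf_eq] at hmem
    have h3 : (3 : ℝ) ≤ ‖stopProc ξ (stopT ξ (afun p)) n ω‖ := by exact_mod_cast hmem
    rw [Real.norm_eq_abs] at h3
    linarith
  rw [eLpNorm_congr_ae hzero, eLpNorm_zero]
  exact zero_le

end Stopping

/-- The interval `[0, 1/6]` is contained in `S`: every measure
`μ_p = p δ₀ + ((1-p)/2)(δ₋₂ + δ₂)` with `p ∈ [0, 1/6]` admits a UI embedding. -/
theorem Icc_zero_sixth_subset_Sset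
    {Ω : Type*} [MeasurableSpace Ω] (P : Measure Ω) (ξ : ℕ → Ω → ℤ)
    (W : IsSSRW P ξ) :
    Set.Icc (0 : ℝ) (1 / 6) ⊆ Sset P ξ W.meas := by
  intro p hp
  refine ⟨⟨hp.1, le_trans hp.2 (by norm_num)⟩, ?_⟩
  exact ⟨stopT ξ (afun p),
    ⟨isStop_stopT P ξ W hp, aefinite_stopT P ξ W hp,
      martingale_stopProc P ξ W hp, ui_stopProc P ξ W hp⟩,
    law_stopVal P ξ W hp⟩

end RWSkorokhod
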